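/- Let B = k[x_1,...,x_n,T_1,...,T_n] with n ≥ 2, let ψ have rows (x_1,...,x_n), (T_1,...,T_n), and let f_0 = f, f_1,...,f_d be a downgraded sequence of a nonzero homogeneous polynomial f ∈ k[x_1,...,x_n] of degree d ≥ 1 (so f_i = (T_1...T_n)·∂f_{i-1} with (x_1...x_n)·∂f_{i-1} = f_{i-1}). Then for each 0 ≤ i ≤ d, the element f_0·T_n^i − x_n^i·f_i lies in I_2(ψ). -/
import Mathlib


open MvPolynomial

noncomputable section

variable (k : Type*) [Field k] (n : ℕ)

/-- The polynomial ring `B = k[x₁,…,xₙ,T₁,…,Tₙ]`. -/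
abbrev B := MvPolynomial (Fin n ⊕ Fin n) k

/-- The variable `xᵢ`. -/
def xv (i : Fin n) : B k n := X (Sum.inl i)

/-- The variable `Tᵢ`. -/
def Tv (i : Fin n) : B k n := X (Sum.inr i)

/-- The ideal `I₂(ψ)` of 2×2 minors of the matrix `ψ` with rows `(x₁,…,xₙ)`, `(T₁,…,Tₙ)`. -/
def I2 : Ideal (B k n) :=
  Ideal.span {p | ∃ i j : Fin n, p = xv k n i * Tv k n j - xv k n j * Tv k n i}

/-- The bigrading: `deg xᵢ = (1,0)`, `deg Tᵢ = (0,1)`. -/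
def w : (Fin n ⊕ Fin n) → ℕ × ℕ := Sum.elim (fun _ => (1, 0)) (fun _ => (0, 1))

/-- `fs` (with witnessing columns `co`) is a downgraded sequence of `F` (with `deg F = d`):
`fs 0 = F(x)`, and for `i < d`, `co i` is a column of bihomogeneous entries of equal bidegree
with `(x₁ … xₙ)·(co i) = fs i` and `fs (i+1) = (T₁ … Tₙ)·(co i)`. -/
def IsDowngradedSeq (d : ℕ) (F : MvPolynomial (Fin n) k) (fs : ℕ → B k n)
    (co : ℕ → Fin n → B k n) : Prop :=
  fs 0 = rename Sum.inl F ∧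
  ∀ i < d, (∃ m : ℕ × ℕ, ∀ j, IsWeightedHomogeneous (w n) (co i j) m) ∧
    (∑ j, xv k n j * co i j) = fs i ∧ fs (i + 1) = ∑ j, Tv k n j * co i j

/-- The key congruence: `f₀·Tₙⁱ − xₙⁱ·fᵢ ∈ I₂(ψ)` for all `0 ≤ i ≤ d`. -/
theorem downgraded_seq_congruence (hn : 2 ≤ n) (d : ℕ) (hd : 1 ≤ d)
    (F : MvPolynomial (Fin n) k) (hF : F.IsHomogeneous d) (hF0 : F ≠ 0)
    (fs : ℕ → B k n) (co : ℕ → Fin n → B k n)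
    (h : IsDowngradedSeq k n d F fs co) :
    ∀ i ≤ d,
      fs 0 * Tv k n ⟨n - 1, by omega⟩ ^ i - xv k n ⟨n - 1, by omega⟩ ^ i * fs i ∈ I2 k n := by

  intro i hi
  induction i with
  | zero => simp only [pow_zero, mul_one, one_mul, sub_self]; exact (I2 k n).zero_mem
  | succ i ih =>
    obtain ⟨_, hx, hT⟩ := h.2 i (by omega)
    set N : Fin n := ⟨n - 1, by omega⟩
    have key : fs i * Tv k n N - xv k n N * fs (i + 1) ∈ I2 k n := by
      rw [← hx, hT, Finset.sum_mul, Finset.mul_sum, ← Finset.sum_sub_distrib]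
      refine Ideal.sum_mem _ fun j _ => ?_
      have : xv k n j * co i j * Tv k n N - xv k n N * (Tv k n j * co i j)
          = (xv k n j * Tv k n N - xv k n N * Tv k n j) * co i j := by ring
      rw [this]
      exact Ideal.mul_mem_right _ _ (Ideal.subset_span ⟨j, N, rfl⟩)
    have heq : fs 0 * Tv k n N ^ (i + 1) - xv k n N ^ (i + 1) * fs (i + 1)
        = (fs 0 * Tv k n N ^ i - xv k n N ^ i * fs i) * Tv k n N
          + xv k n N ^ i * (fs i * Tv k n N - xv k n N * fs (i + 1)) := by ring
    rw [heq]
    exact Ideal.add_mem _ (Ideal.mul_mem_right _ _ (ih (by omega))) (Ideal.mul_mem_left _ _ key)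


end
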